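/- For every sorted probability distribution p_1 ≥ ⋯ ≥ p_N ≥ 0 and every 0 ≤ p ≤ 1/2, the zigzag cut is within (1−2p)/4 of the maximum cut: CUT_ZZ(G_X) ≥ MAXCUT(G_X) − (1/4)·(1−2p), where CUT_ZZ is the cut weight of the zigzag partition A_ZZ = {k : k odd}. -/

import Mathlib

open Finset
open MeasureTheory

noncomputable def guess (N : ℕ) (q : Fin N → ℝ) : ℝ :=
  Finset.univ.inf' ⟨1, Finset.mem_univ 1⟩
    (fun σ : Equiv.Perm (Fin N) => ∑ k : Fin N, ((k : ℝ) + 1) * q (σ k))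

noncomputable def guessA (N : ℕ) (q : Fin N → ℝ) (p : ℝ) (A : Finset (Fin N)) : ℝ :=
  ∑ y : Bool, Finset.univ.inf' ⟨1, Finset.mem_univ 1⟩
    (fun σ : Equiv.Perm (Fin N) => ∑ k : Fin N,
      ((k : ℝ) + 1) * q (σ k) * (if ((σ k ∈ A) ↔ (y = true)) then 1 - p else p))

noncomputable def guessOpt (N : ℕ) (q : Fin N → ℝ) (p : ℝ) : ℝ :=
  Finset.univ.inf' ⟨∅, Finset.mem_univ ∅⟩ (fun A : Finset (Fin N) => guessA N q p A)

def zigzag (N : ℕ) : Finset (Fin N) := Finset.univ.filter (fun k => (k : ℕ) % 2 = 0)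

noncomputable def wt (N : ℕ) (q : Fin N → ℝ) (p : ℝ) (i j : Fin N) : ℝ :=
  max 0 ((1 - p) * min (q i) (q j) - p * max (q i) (q j))

noncomputable def cut (N : ℕ) (q : Fin N → ℝ) (p : ℝ) (A : Finset (Fin N)) : ℝ :=
  ∑ i ∈ A, ∑ j ∈ Aᶜ, wt N q p i j

noncomputable def maxcut (N : ℕ) (q : Fin N → ℝ) (p : ℝ) : ℝ :=
  Finset.univ.sup' ⟨∅, Finset.mem_univ ∅⟩ (fun A : Finset (Fin N) => cut N q p A)

/-! ### Auxiliary combinatorial lemmas -/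

lemma evens_Ico (a b : ℕ) :
    ((Finset.Ico a b).filter (fun k => k % 2 = 0)).card = (b+1)/2 - (a+1)/2 := by
  have h : (Finset.Ico a b).filter (fun k => k % 2 = 0)
      = (Finset.Ico ((a+1)/2) ((b+1)/2)).image (fun i => 2*i) := by
    ext k
    simp only [Finset.mem_filter, Finset.mem_Ico, Finset.mem_image]
    constructor
    · rintro ⟨⟨h1, h2⟩, h3⟩
      exact ⟨k/2, ⟨by omega, by omega⟩, by omega⟩
    · rintro ⟨i, ⟨h1, h2⟩, rfl⟩
      omega
  rw [h, Finset.card_image_of_injective _ (fun x y h => by omega), Nat.card_Ico]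

lemma convex_eq_Icc (T : Finset ℕ) (h : T.Nonempty)
    (hc : ∀ k, T.min' h ≤ k → k ≤ T.max' h → k ∈ T) :
    T = Finset.Icc (T.min' h) (T.max' h) := by
  ext k
  simp only [Finset.mem_Icc]
  exact ⟨fun hk => ⟨T.min'_le k hk, T.le_max' k hk⟩, fun ⟨h1, h2⟩ => hc k h1 h2⟩

lemma parity_count {N : ℕ} (S : Finset (Fin N))
    (hconv : ∀ i k j : Fin N, i ≤ k → k ≤ j → i ∈ S → j ∈ S → k ∈ S) :
    S.card ≤ 2 * (S.filter (fun k : Fin N => (k : ℕ) % 2 = 0)).card + 1 ∧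
    2 * (S.filter (fun k : Fin N => (k : ℕ) % 2 = 0)).card ≤ S.card + 1 := by
  rcases S.eq_empty_or_nonempty with rfl | hS
  · simp
  set T : Finset ℕ := S.image Fin.val with hT
  have hTne : T.Nonempty := hS.image _
  have hm : T.card = S.card := Finset.card_image_of_injective _ Fin.val_injective
  have hz : (T.filter (fun k => k % 2 = 0)).card
      = (S.filter (fun k : Fin N => (k : ℕ) % 2 = 0)).card := by
    rw [hT, Finset.filter_image]
    exact Finset.card_image_of_injective _ Fin.val_injective
  have hc : ∀ k, T.min' hTne ≤ k → k ≤ T.max' hTne → k ∈ T := by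
    intro k h1 h2
    obtain ⟨i, hiS, hiv⟩ := Finset.mem_image.mp (T.min'_mem hTne)
    obtain ⟨j, hjS, hjv⟩ := Finset.mem_image.mp (T.max'_mem hTne)
    have hkN : k < N := lt_of_le_of_lt (h2.trans_eq hjv.symm) j.isLt
    have hk : (⟨k, hkN⟩ : Fin N) ∈ S := by
      apply hconv i ⟨k, hkN⟩ j _ _ hiS hjS
      · exact Fin.mk_le_of_le_val (by rw [hiv]; exact h1)
      · exact (Fin.le_def).mpr (by simpa [hjv] using h2)
    exact Finset.mem_image.mpr ⟨_, hk, rfl⟩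
  have hIcc := convex_eq_Icc T hTne hc
  set a := T.min' hTne
  set b := T.max' hTne
  have hab : a ≤ b := Finset.min'_le _ _ (T.max'_mem hTne)
  have hcard : T.card = b + 1 - a := by rw [hIcc, Nat.card_Icc]
  have hzc : (T.filter (fun k => k % 2 = 0)).card = (b + 2) / 2 - (a + 1) / 2 := by
    rw [hIcc]
    have : Finset.Icc a b = Finset.Ico a (b + 1) := by
      ext x; simp [Nat.lt_succ_iff]
    rw [this, evens_Ico]
  rw [← hm, ← hz]
  omega

lemma prod_le {a a' z z' m : ℕ} (ha : a + a' = m) (hzz : z + z' = m)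
    (h1 : m ≤ 2 * z + 1) (h2 : 2 * z ≤ m + 1) : a * a' ≤ z * z' := by
  have h4 : 4 * (a * a') ≤ 4 * (z * z') + 1 := by
    nlinarith [sq_nonneg ((a:ℤ) - a'), sq_nonneg ((z:ℤ) - z')]
  obtain ⟨u, hu⟩ : ∃ u, a * a' = u := ⟨_, rfl⟩
  obtain ⟨v, hv⟩ : ∃ v, z * z' = v := ⟨_, rfl⟩
  rw [hu, hv] at h4 ⊢
  omega

/-- The master combinatorial lemma: on an order-convex set `S`, the zigzag
partition cuts at least as many pairs as any partition `A`. -/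
lemma master_comb {N : ℕ} (S A : Finset (Fin N))
    (hconv : ∀ i k j : Fin N, i ≤ k → k ≤ j → i ∈ S → j ∈ S → k ∈ S) :
    (A ∩ S).card * (Aᶜ ∩ S).card
      ≤ ((zigzag N) ∩ S).card * ((zigzag N)ᶜ ∩ S).card := by
  have split : ∀ B : Finset (Fin N), (B ∩ S).card + (Bᶜ ∩ S).card = S.card := by
    intro B
    have h1 : B ∩ S = S.filter (fun k => k ∈ B) := by
      ext k; simp [Finset.mem_filter, and_comm]
    have h2 : Bᶜ ∩ S = S.filter (fun k => ¬ k ∈ B) := by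
      ext k; simp [Finset.mem_filter, and_comm]
    rw [h1, h2, Finset.card_filter_add_card_filter_not]
  have hzz : (zigzag N) ∩ S = S.filter (fun k : Fin N => (k : ℕ) % 2 = 0) := by
    ext k; simp [zigzag, Finset.mem_filter, and_comm]
  obtain ⟨hb1, hb2⟩ := parity_count S hconv
  exact prod_le (split A) (split (zigzag N)) (by rw [hzz]; omega) (by rw [hzz]; omega)

/-! ### The slicing argument -/

section slicing

variable {N : ℕ} (q : Fin N → ℝ) (p : ℝ)

/-- Indicator of the level set at height `t`. -/
noncomputable def lev (k : Fin N) (t : ℝ) : ℝ :=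
  if p * q k < t ∧ t < (1 - p) * q k then 1 else 0

lemma lev_prod_eq_indicator (i j : Fin N) :
    (fun t => lev q p i t * lev q p j t)
      = (Set.Ioo (max (p * q i) (p * q j)) (min ((1-p) * q i) ((1-p) * q j))).indicator
          (fun _ => (1:ℝ)) := by
  funext t
  simp only [lev, Set.indicator_apply, Set.mem_Ioo, max_lt_iff, lt_min_iff]
  have hprod : ∀ (P Q : Prop) [Decidable P] [Decidable Q],
      (if P then (1:ℝ) else 0) * (if Q then 1 else 0)
      = if P ∧ Q then 1 else 0 := by
    intro P Q _ _
    by_cases hP : P <;> by_cases hQ : Q <;> simp [hP, hQ]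
  rw [hprod]
  exact if_congr (by tauto) rfl rfl

lemma lev_prod_integrable (i j : Fin N) :
    Integrable (fun t => lev q p i t * lev q p j t) := by
  rw [lev_prod_eq_indicator]
  rw [integrable_indicator_iff measurableSet_Ioo]
  exact (integrableOn_const_iff (C := (1:ℝ))).mpr (Or.inr (by rw [Real.volume_Ioo]; exact ENNReal.ofReal_lt_top))

lemma wt_eq_integral (hp0 : 0 ≤ p) (hp1 : p ≤ 1) (i j : Fin N) :
    wt N q p i j = ∫ t, lev q p i t * lev q p j t := by
  rw [lev_prod_eq_indicator, MeasureTheory.integral_indicator_const _ measurableSet_Ioo]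
  rw [measureReal_def, Real.volume_Ioo]
  have hmin : min ((1-p) * q i) ((1-p) * q j) = (1-p) * min (q i) (q j) :=
    (mul_min_of_nonneg _ _ (by linarith)).symm
  have hmax : max (p * q i) (p * q j) = p * max (q i) (q j) :=
    (mul_max_of_nonneg _ _ hp0).symm
  rw [hmin, hmax, smul_eq_mul, mul_one, wt]
  rcases le_total ((1 - p) * min (q i) (q j) - p * max (q i) (q j)) 0 with h | h
  · rw [ENNReal.ofReal_of_nonpos h]
    simp [max_eq_left h]
  · rw [ENNReal.toReal_ofReal h, max_eq_right h]

lemma cut_eq_integral (hp0 : 0 ≤ p) (hp1 : p ≤ 1) (A : Finset (Fin N)) :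
    cut N q p A = ∫ t, (∑ i ∈ A, lev q p i t) * (∑ j ∈ Aᶜ, lev q p j t) := by
  unfold cut
  have h1 : ∀ i ∈ A, ∑ j ∈ Aᶜ, wt N q p i j
      = ∫ t, ∑ j ∈ Aᶜ, lev q p i t * lev q p j t := by
    intro i _
    rw [integral_finset_sum _ (fun j _ => lev_prod_integrable q p i j)]
    exact Finset.sum_congr rfl (fun j _ => wt_eq_integral q p hp0 hp1 i j)
  rw [Finset.sum_congr rfl h1,
    ← integral_finset_sum _ (fun i _ => integrable_finset_sum _
      (fun j _ => lev_prod_integrable q p i j))]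
  congr 1
  funext t
  rw [Finset.sum_mul_sum]

lemma sum_lev_eq_card (B : Finset (Fin N)) (t : ℝ) :
    ∑ i ∈ B, lev q p i t
      = ((B ∩ Finset.univ.filter
          (fun k : Fin N => p * q k < t ∧ t < (1 - p) * q k)).card : ℝ) := by
  unfold lev
  rw [Finset.sum_boole]
  congr 2
  ext k
  simp [Finset.mem_filter]

end slicing

lemma cut_le_zigzag (N : ℕ) (q : Fin N → ℝ)
    (hsort : ∀ i j : Fin N, i ≤ j → q j ≤ q i)
    (p : ℝ) (hp0 : 0 ≤ p) (hp1 : p ≤ 1) (A : Finset (Fin N)) :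
    cut N q p A ≤ cut N q p (zigzag N) := by
  rw [cut_eq_integral q p hp0 hp1 A, cut_eq_integral q p hp0 hp1 (zigzag N)]
  have hint : ∀ B : Finset (Fin N),
      Integrable (fun t => (∑ i ∈ B, lev q p i t) * (∑ j ∈ Bᶜ, lev q p j t)) := by
    intro B
    have : (fun t => (∑ i ∈ B, lev q p i t) * (∑ j ∈ Bᶜ, lev q p j t))
        = fun t => ∑ i ∈ B, ∑ j ∈ Bᶜ, lev q p i t * lev q p j t := by
      funext t; rw [Finset.sum_mul_sum]
    rw [this]
    exact integrable_finset_sum _ (fun i _ => integrable_finset_sum _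
      (fun j _ => lev_prod_integrable q p i j))
  apply integral_mono (hint A) (hint (zigzag N))
  intro t
  simp only [sum_lev_eq_card]
  set S := Finset.univ.filter (fun k : Fin N => p * q k < t ∧ t < (1 - p) * q k) with hS
  have hconv : ∀ i k j : Fin N, i ≤ k → k ≤ j → i ∈ S → j ∈ S → k ∈ S := by
    intro i k j hik hkj hi hj
    rw [hS, Finset.mem_filter] at *
    refine ⟨Finset.mem_univ _, ?_, ?_⟩
    · calc p * q k ≤ p * q i := by
            exact mul_le_mul_of_nonneg_left (hsort i k hik) hp0
        _ < t := hi.2.1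
    · calc t < (1 - p) * q j := hj.2.2
        _ ≤ (1 - p) * q k := by
            exact mul_le_mul_of_nonneg_left (hsort k j hkj) (by linarith)
  have := master_comb S A hconv
  exact_mod_cast Nat.cast_le.mpr this

theorem stmt_17 (N : ℕ) (hN : 1 ≤ N) (q : Fin N → ℝ)
    (hnn : ∀ i, 0 ≤ q i) (hsum : ∑ i, q i = 1)
    (hsort : ∀ i j : Fin N, i ≤ j → q j ≤ q i)
    (p : ℝ) (hp0 : 0 ≤ p) (hp : p ≤ 1 / 2) :
    maxcut N q p - (1 / 4) * (1 - 2 * p) ≤ cut N q p (zigzag N) := by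
  have hmax : maxcut N q p ≤ cut N q p (zigzag N) := by
    apply Finset.sup'_le
    intro A _
    exact cut_le_zigzag N q hsort p hp0 (by linarith) A
  have hslack : (0:ℝ) ≤ (1 / 4) * (1 - 2 * p) := by nlinarith
  linarith
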